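/- arXiv:1206.5402 — 5 statements merged into one kernel-verified Lean document; each statement's English description precedes it below -/
import Mathlib

section
/- Let m, n be positive integers and G = Z_m × Z_n with g_1, g_2 the generators of the two cyclic factors. For an integer 0 ≤ b < gcd(m,n) define Φ_b(g_1^i g_2^j, g_1^s g_2^t) = ζ_{gcd(m,n)}^{b·j·s} for 0 ≤ i, s < m and 0 ≤ j, t < n. Then each Φ_b is a normalized 2-cocycle on G with values in k^*, and every normalized 2-cocycle on G with values in k^* is cohomologous to Φ_b for exactly one integer b with 0 ≤ b < gcd(m,n). -/
/-- A 2-cochain `Φ : G × G → kˣ` (trivial action) is a 2-cocycle if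
`Φ(y,z)·Φ(xy,z)⁻¹·Φ(x,yz)·Φ(x,y)⁻¹ = 1` for all `x, y, z ∈ G`. -/
def Is2Cocycle {G : Type*} [AddGroup G] {k : Type*} [Field k]
    (Φ : G → G → kˣ) : Prop :=
  ∀ x y z : G, Φ y z * (Φ (x + y) z)⁻¹ * Φ x (y + z) * (Φ x y)⁻¹ = 1

/-- A 2-cochain is normalized if `Φ(x,1) = Φ(1,x) = 1` for all `x`. -/
def IsNormalized2Cochain {G : Type*} [AddGroup G] {k : Type*} [Field k]
    (Φ : G → G → kˣ) : Prop :=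
  ∀ x : G, Φ x 0 = 1 ∧ Φ 0 x = 1

/-- The 2-cochain `Φ_b(g₁^i g₂^j, g₁^s g₂^t) = ζ_{gcd(m,n)}^{b·j·s}` on `Z_m × Z_n`. -/
noncomputable def PhiB {k : Type*} [Field k] (m n : ℕ) (ζ : kˣ) (b : ℕ)
    (x y : ZMod m × ZMod n) : kˣ :=
  ζ ^ (b * x.2.val * y.1.val)

set_option linter.unusedSectionVars false

section Aux

variable {k : Type*} [Field k] {G : Type*} [AddCommGroup G]

private lemma mul_comm3 {α : Type*} [CommGroup α] (a b c : α) : a * b * c = c * b * a := by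
  rw [mul_comm (a * b) c, mul_comm a b, ← mul_assoc]

lemma cocycle_cross {Φ : G → G → kˣ} (hc : Is2Cocycle Φ) (x y z : G) :
    Φ y z * Φ x (y + z) = Φ x y * Φ (x + y) z := by
  have h := hc x y z
  rw [mul_inv_eq_one, mul_right_comm, mul_inv_eq_iff_eq_mul] at h
  exact h

lemma cross_cocycle {Φ : G → G → kˣ}
    (h : ∀ x y z : G, Φ y z * Φ x (y + z) = Φ x y * Φ (x + y) z) : Is2Cocycle Φ := by
  intro x y z
  rw [mul_inv_eq_one, mul_right_comm, mul_inv_eq_iff_eq_mul]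
  exact h x y z

noncomputable def betaFn (Φ : G → G → kˣ) (x y : G) : kˣ := Φ x y / Φ y x

variable {Φ : G → G → kˣ}

lemma betaFn_swap (x y : G) : betaFn Φ x y = (betaFn Φ y x)⁻¹ := by
  show Φ x y / Φ y x = (Φ y x / Φ x y)⁻¹
  rw [inv_div]

lemma betaFn_self (x : G) : betaFn Φ x x = 1 := div_self' _

lemma betaFn_zero_right (hn : ∀ x : G, Φ x 0 = 1 ∧ Φ 0 x = 1) (x : G) :
    betaFn Φ x 0 = 1 := by
  show Φ x 0 / Φ 0 x = 1
  rw [(hn x).1, (hn x).2, div_one]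

lemma betaFn_zero_left (hn : ∀ x : G, Φ x 0 = 1 ∧ Φ 0 x = 1) (y : G) :
    betaFn Φ 0 y = 1 := by
  show Φ 0 y / Φ y 0 = 1
  rw [(hn y).2, (hn y).1, div_one]

section withcc
variable (hc : ∀ x y z : G, Φ y z * Φ x (y + z) = Φ x y * Φ (x + y) z)
include hc

lemma betaFn_add_right' (x y z : G) :
    betaFn Φ x (y + z) = betaFn Φ x y * betaFn Φ x z := by
  have h1 := congrArg Units.val (hc x y z)
  have h2 := congrArg Units.val (hc y z x)
  have h3 := congrArg Units.val (hc y x z)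
  rw [add_comm z x] at h2
  rw [add_comm y x] at h3
  simp only [Units.val_mul] at h1 h2 h3
  show Φ x (y + z) / Φ (y + z) x = Φ x y / Φ y x * (Φ x z / Φ z x)
  rw [div_mul_div_comm, div_eq_div_iff_mul_eq_mul]
  have key : Φ y z * (Φ x (y + z) * (Φ y x * Φ z x)) = Φ y z * (Φ x y * Φ x z * Φ (y + z) x) := by
    rw [Units.ext_iff]
    simp only [Units.val_mul]
    linear_combination ((Φ y x : k) * (Φ z x : k)) * h1 - ((Φ x y : k) * (Φ z x : k)) * h3
      + ((Φ x y : k) * (Φ x z : k)) * h2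
  exact mul_left_cancel key

lemma betaFn_add_left (x y z : G) :
    betaFn Φ (x + y) z = betaFn Φ x z * betaFn Φ y z := by
  rw [betaFn_swap, betaFn_add_right' hc, mul_inv, ← betaFn_swap, ← betaFn_swap]

lemma betaFn_nsmul_right (hn : ∀ x : G, Φ x 0 = 1 ∧ Φ 0 x = 1) (x y : G) (s : ℕ) :
    betaFn Φ x (s • y) = betaFn Φ x y ^ s := by
  induction s with
  | zero => simpa using betaFn_zero_right hn x
  | succ t ih => rw [succ_nsmul, betaFn_add_right' hc, ih, pow_succ]

lemma betaFn_nsmul_left (hn : ∀ x : G, Φ x 0 = 1 ∧ Φ 0 x = 1) (x y : G) (s : ℕ) :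
    betaFn Φ (s • x) y = betaFn Φ x y ^ s := by
  rw [betaFn_swap, betaFn_nsmul_right hc hn, ← inv_pow, ← betaFn_swap]

lemma betaFn_nsmul_nsmul (hn : ∀ x : G, Φ x 0 = 1 ∧ Φ 0 x = 1) (x y : G) (s t : ℕ) :
    betaFn Φ (s • x) (t • y) = betaFn Φ x y ^ (s * t) := by
  rw [betaFn_nsmul_left hc hn, betaFn_nsmul_right hc hn, ← pow_mul, mul_comm t s]

end withcc
end Aux

/-- The abelian extension of `G` by `kˣ` determined by a symmetric normalized 2-cocycle. -/
structure ExtC {k : Type*} [Field k] {G : Type*} (Ψ : G → G → kˣ) where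
  u : kˣ
  g : G

noncomputable def extCommGroup {k : Type*} [Field k] {G : Type*} [AddCommGroup G]
    (Ψ : G → G → kˣ)
    (hc : ∀ x y z : G, Ψ y z * Ψ x (y + z) = Ψ x y * Ψ (x + y) z)
    (hn : ∀ x : G, Ψ x 0 = 1 ∧ Ψ 0 x = 1)
    (hs : ∀ x y : G, Ψ x y = Ψ y x) : CommGroup (ExtC Ψ) where
  mul p q := ⟨p.u * q.u * Ψ p.g q.g, p.g + q.g⟩
  one := ⟨1, 0⟩
  inv p := ⟨(p.u * Ψ p.g (-p.g))⁻¹, -p.g⟩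
  mul_assoc p q r := by
    refine congrArg₂ ExtC.mk ?_ (add_assoc _ _ _)
    show p.u * q.u * Ψ p.g q.g * r.u * Ψ (p.g + q.g) r.g
      = p.u * (q.u * r.u * Ψ q.g r.g) * Ψ p.g (q.g + r.g)
    rw [Units.ext_iff]
    simp only [Units.val_mul]
    have h := congrArg Units.val (hc p.g q.g r.g)
    simp only [Units.val_mul] at h
    linear_combination (-((p.u : k) * q.u * r.u)) * h
  one_mul p := by
    refine congrArg₂ ExtC.mk ?_ (zero_add _)
    show 1 * p.u * Ψ 0 p.g = p.u
    rw [(hn p.g).2, one_mul, mul_one]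
  mul_one p := by
    refine congrArg₂ ExtC.mk ?_ (add_zero _)
    show p.u * 1 * Ψ p.g 0 = p.u
    rw [(hn p.g).1, mul_one, mul_one]
  inv_mul_cancel p := by
    refine congrArg₂ ExtC.mk ?_ (neg_add_cancel _)
    show (p.u * Ψ p.g (-p.g))⁻¹ * p.u * Ψ (-p.g) p.g = 1
    rw [hs (-p.g) p.g]
    group
  mul_comm p q := by
    refine congrArg₂ ExtC.mk ?_ (add_comm _ _)
    show p.u * q.u * Ψ p.g q.g = q.u * p.u * Ψ q.g p.g
    rw [hs p.g q.g, mul_comm p.u q.u]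

/-- A symmetric normalized 2-cocycle with values in the units of an algebraically closed
field is a 2-coboundary: the corresponding abelian extension splits since `kˣ` is divisible. -/
lemma exists_trivialization {k : Type*} [Field k] [IsAlgClosed k]
    {G : Type*} [AddCommGroup G] (Ψ : G → G → kˣ)
    (hc : ∀ x y z : G, Ψ y z * Ψ x (y + z) = Ψ x y * Ψ (x + y) z)
    (hn : ∀ x : G, Ψ x 0 = 1 ∧ Ψ 0 x = 1)
    (hs : ∀ x y : G, Ψ x y = Ψ y x) :
    ∃ u : G → kˣ, ∀ x y : G, Ψ x y = u x * u y * (u (x + y))⁻¹ := by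
  letI : CommGroup (ExtC Ψ) := extCommGroup Ψ hc hn hs
  letI : RootableBy kˣ ℕ := rootableByOfPowLeftSurj _ _ (fun {s} hs0 a => by
    obtain ⟨z, hz⟩ := IsAlgClosed.exists_pow_nat_eq (a : k) (Nat.pos_of_ne_zero hs0)
    have hz0 : z ≠ 0 := by
      rintro rfl
      rw [zero_pow hs0] at hz
      exact a.ne_zero hz.symm
    exact ⟨Units.mk0 z hz0, Units.ext (by simpa using hz)⟩)
  letI : RootableBy kˣ ℤ := Group.rootableByIntOfRootableByNat kˣ
  letI : DivisibleBy (Additive kˣ) ℤ :=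
    { div := fun a s => Additive.ofMul (RootableBy.root a.toMul s)
      div_zero := fun a => congrArg Additive.ofMul (RootableBy.root_zero a.toMul)
      div_cancel := fun {s} a hs0 => by
        show s • Additive.ofMul (RootableBy.root a.toMul s) = a
        rw [← ofMul_zpow, RootableBy.root_cancel _ hs0]; rfl }
  have hb : Module.Baer ℤ (Additive kˣ) := Module.Baer.of_divisible _
  have hΨ00 : Ψ 0 0 = 1 := (hn 0).1
  let ι : kˣ →* ExtC Ψ :=
    { toFun := fun a => ⟨a, 0⟩
      map_one' := rfl
      map_mul' := fun a b => by
        refine congrArg₂ ExtC.mk ?_ (zero_add 0).symm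
        show a * b = a * b * Ψ 0 0
        rw [hΨ00, mul_one] }
  have hι : Function.Injective (MonoidHom.toAdditive ι) := fun a b h => by
    have := congrArg (fun p : Additive (ExtC Ψ) => (p.toMul).u) h
    exact this
  obtain ⟨r, hr⟩ := hb.extension_property_addMonoidHom (MonoidHom.toAdditive ι) hι
    (AddMonoidHom.id _)
  have hrι : ∀ a : kˣ, r (Additive.ofMul (⟨a, 0⟩ : ExtC Ψ)) = Additive.ofMul a := fun a => by
    have := congrArg (fun f : Additive kˣ →+ Additive kˣ => f (Additive.ofMul a)) hr
    exact this
  refine ⟨fun x => Additive.toMul (r (Additive.ofMul (⟨1, x⟩ : ExtC Ψ))), fun x y => ?_⟩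
  show Ψ x y = Additive.toMul (r (Additive.ofMul (⟨1, x⟩ : ExtC Ψ)))
      * Additive.toMul (r (Additive.ofMul (⟨1, y⟩ : ExtC Ψ)))
      * (Additive.toMul (r (Additive.ofMul (⟨1, x + y⟩ : ExtC Ψ))))⁻¹
  have hmul : (⟨1, x⟩ : ExtC Ψ) * ⟨1, y⟩ = (⟨Ψ x y, 0⟩ : ExtC Ψ) * ⟨1, x + y⟩ := by
    refine congrArg₂ ExtC.mk ?_ (zero_add (x + y)).symm
    show 1 * 1 * Ψ x y = Ψ x y * 1 * Ψ 0 (x + y)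
    rw [(hn (x + y)).2, one_mul, one_mul, mul_one, mul_one]
  have h2 : r (Additive.ofMul ((⟨1, x⟩ : ExtC Ψ) * ⟨1, y⟩))
      = r (Additive.ofMul (⟨1, x⟩ : ExtC Ψ)) + r (Additive.ofMul (⟨1, y⟩ : ExtC Ψ)) := by
    rw [ofMul_mul, map_add]
  rw [hmul, ofMul_mul, map_add, hrι] at h2
  have h3 := congrArg Additive.toMul h2
  simp only [toMul_add, toMul_ofMul] at h3
  rw [← h3]
  group

section PhiBFacts

variable {k : Type*} [Field k]

lemma phiB_cross (m n : ℕ) (hm : 0 < m) (hn : 0 < n) (ζ : kˣ) (b : ℕ)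
    (hζ : IsPrimitiveRoot ζ (Nat.gcd m n)) (x y z : ZMod m × ZMod n) :
    PhiB m n ζ b y z * PhiB m n ζ b x (y + z)
      = PhiB m n ζ b x y * PhiB m n ζ b (x + y) z := by
  haveI : NeZero m := ⟨hm.ne'⟩
  haveI : NeZero n := ⟨hn.ne'⟩
  simp only [PhiB]
  rw [← pow_add, ← pow_add]
  apply pow_eq_pow_iff_modEq.mpr
  rw [← hζ.eq_orderOf]
  have h1 : (y + z).1.val ≡ y.1.val + z.1.val [MOD Nat.gcd m n] :=
    Nat.ModEq.of_dvd (Nat.gcd_dvd_left m n)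
      (by rw [Prod.fst_add, ZMod.val_add]; exact Nat.mod_modEq _ m)
  have h2 : (x + y).2.val ≡ x.2.val + y.2.val [MOD Nat.gcd m n] :=
    Nat.ModEq.of_dvd (Nat.gcd_dvd_right m n)
      (by rw [Prod.snd_add, ZMod.val_add]; exact Nat.mod_modEq _ n)
  calc b * y.2.val * z.1.val + b * x.2.val * (y + z).1.val
      ≡ b * y.2.val * z.1.val + b * x.2.val * (y.1.val + z.1.val) [MOD Nat.gcd m n] :=
        Nat.ModEq.add_left _ (h1.mul_left _)
    _ = b * x.2.val * y.1.val + b * (x.2.val + y.2.val) * z.1.val := by ring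
    _ ≡ b * x.2.val * y.1.val + b * (x + y).2.val * z.1.val [MOD Nat.gcd m n] :=
        Nat.ModEq.add_left _ ((h2.symm.mul_left b).mul_right _)

lemma phiB_norm (m n : ℕ) (ζ : kˣ) (b : ℕ) (x : ZMod m × ZMod n) :
    PhiB m n ζ b x 0 = 1 ∧ PhiB m n ζ b 0 x = 1 := by
  constructor
  · show ζ ^ (b * x.2.val * (0 : ZMod m × ZMod n).1.val) = 1
    rw [Prod.fst_zero, ZMod.val_zero, mul_zero, pow_zero]
  · show ζ ^ (b * (0 : ZMod m × ZMod n).2.val * x.1.val) = 1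
    rw [Prod.snd_zero, ZMod.val_zero, mul_zero, zero_mul, pow_zero]

end PhiBFacts

/-- Each `Φ_b` (`0 ≤ b < gcd(m,n)`) is a normalized 2-cocycle on
`Z_m × Z_n` with values in `kˣ`, and every normalized 2-cocycle on `Z_m × Z_n` with values
in `kˣ` is cohomologous to `Φ_b` for exactly one `0 ≤ b < gcd(m,n)`. -/
theorem statement6 (k : Type*) [Field k] [IsAlgClosed k] [CharZero k]
    (m n : ℕ) (hm : 0 < m) (hn : 0 < n)
    (ζ : kˣ) (hζ : IsPrimitiveRoot ζ (Nat.gcd m n)) :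
    (∀ b : ℕ, b < Nat.gcd m n →
      Is2Cocycle (PhiB m n ζ b) ∧ IsNormalized2Cochain (PhiB m n ζ b)) ∧
    (∀ Φ : ZMod m × ZMod n → ZMod m × ZMod n → kˣ,
      Is2Cocycle Φ → IsNormalized2Cochain Φ →
        ∃! b : ℕ, b < Nat.gcd m n ∧
          ∃ g : ZMod m × ZMod n → kˣ,
            ∀ x y : ZMod m × ZMod n,
              Φ x y / PhiB m n ζ b x y = g y * (g (x + y))⁻¹ * g x) := by
  haveI : NeZero m := ⟨hm.ne'⟩
  haveI : NeZero n := ⟨hn.ne'⟩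
  have hd : 0 < Nat.gcd m n := Nat.gcd_pos_of_pos_left n hm
  haveI : NeZero (Nat.gcd m n) := ⟨hd.ne'⟩
  constructor
  · exact fun b _ => ⟨cross_cocycle (phiB_cross m n hm hn ζ b hζ), phiB_norm m n ζ b⟩
  intro Φ hc hnorm
  have hcc := cocycle_cross hc
  -- the generators
  set g₁ : ZMod m × ZMod n := ((1 : ZMod m), (0 : ZMod n)) with hg₁
  set g₂ : ZMod m × ZMod n := ((0 : ZMod m), (1 : ZMod n)) with hg₂
  -- the uniqueness argument, used for both parts of `∃!`
  have huniq : ∀ b₁ b₂ : ℕ, b₁ < Nat.gcd m n → b₂ < Nat.gcd m n →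
      (∃ g : ZMod m × ZMod n → kˣ, ∀ x y : ZMod m × ZMod n,
        Φ x y / PhiB m n ζ b₁ x y = g y * (g (x + y))⁻¹ * g x) →
      (∃ g : ZMod m × ZMod n → kˣ, ∀ x y : ZMod m × ZMod n,
        Φ x y / PhiB m n ζ b₂ x y = g y * (g (x + y))⁻¹ * g x) →
      b₁ = b₂ := by
    rintro b₁ b₂ hb₁ hb₂ ⟨g, hg⟩ ⟨f, hf⟩
    rcases le_or_gt (Nat.gcd m n) 1 with hd1 | hd1
    · omega
    · have hm1 : 1 < m := lt_of_lt_of_le hd1 (Nat.le_of_dvd hm (Nat.gcd_dvd_left m n))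
      have hn1 : 1 < n := lt_of_lt_of_le hd1 (Nat.le_of_dvd hn (Nat.gcd_dvd_right m n))
      haveI : Fact (1 < m) := ⟨hm1⟩
      haveI : Fact (1 < n) := ⟨hn1⟩
      have symmRatio : ∀ (b : ℕ) (g : ZMod m × ZMod n → kˣ),
          (∀ x y : ZMod m × ZMod n,
            Φ x y / PhiB m n ζ b x y = g y * (g (x + y))⁻¹ * g x) →
          ∀ x y : ZMod m × ZMod n,
            Φ x y * PhiB m n ζ b y x = Φ y x * PhiB m n ζ b x y := by
        intro b g hgb x y
        rw [← div_eq_div_iff_mul_eq_mul, hgb x y, hgb y x, add_comm y x]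
        exact mul_comm3 _ _ _
      have hA := symmRatio b₁ g hg g₂ g₁
      have hB := symmRatio b₂ f hf g₂ g₁
      -- compute the four PhiB values at the generators
      have e1 : PhiB m n ζ b₁ g₂ g₁ = ζ ^ b₁ := by
        show ζ ^ (b₁ * (1 : ZMod n).val * (1 : ZMod m).val) = ζ ^ b₁
        rw [ZMod.val_one, ZMod.val_one, mul_one, mul_one]
      have e2 : PhiB m n ζ b₂ g₂ g₁ = ζ ^ b₂ := by
        show ζ ^ (b₂ * (1 : ZMod n).val * (1 : ZMod m).val) = ζ ^ b₂
        rw [ZMod.val_one, ZMod.val_one, mul_one, mul_one]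
      have e3 : PhiB m n ζ b₁ g₁ g₂ = 1 := by
        show ζ ^ (b₁ * (0 : ZMod n).val * (0 : ZMod m).val) = 1
        rw [ZMod.val_zero, mul_zero, zero_mul, pow_zero]
      have e4 : PhiB m n ζ b₂ g₁ g₂ = 1 := by
        show ζ ^ (b₂ * (0 : ZMod n).val * (0 : ZMod m).val) = 1
        rw [ZMod.val_zero, mul_zero, zero_mul, pow_zero]
      rw [e1, e3] at hA
      rw [e2, e4] at hB
      -- hA : Φ g₂ g₁ * 1 = Φ g₁ g₂ * ζ ^ b₁ ; hB likewise with b₂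
      have : (ζ : kˣ) ^ b₁ = ζ ^ b₂ := by
        have key : Φ g₁ g₂ * ζ ^ b₁ = Φ g₁ g₂ * ζ ^ b₂ := by
          rw [← hA, ← hB]
        exact mul_left_cancel key
      exact hζ.pow_inj hb₁ hb₂ this
  -- now construct the distinguished `b₀`
  set c0 : kˣ := betaFn Φ g₂ g₁ with hc0def
  have hg1m : (m • g₁ : ZMod m × ZMod n) = 0 := by
    refine Prod.ext ?_ ?_
    · show m • (1 : ZMod m) = 0
      rw [nsmul_eq_mul, mul_one, ZMod.natCast_self]
    · show m • (0 : ZMod n) = 0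
      rw [smul_zero]
  have hg2n : (n • g₂ : ZMod m × ZMod n) = 0 := by
    refine Prod.ext ?_ ?_
    · show n • (0 : ZMod m) = 0
      rw [smul_zero]
    · show n • (1 : ZMod n) = 0
      rw [nsmul_eq_mul, mul_one, ZMod.natCast_self]
  have hc0m : c0 ^ m = 1 := by
    rw [hc0def, ← betaFn_nsmul_right hcc hnorm, hg1m, betaFn_zero_right hnorm]
  have hc0n : c0 ^ n = 1 := by
    rw [hc0def, ← betaFn_nsmul_left hcc hnorm, hg2n, betaFn_zero_left hnorm]
  have hc0d : c0 ^ Nat.gcd m n = 1 :=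
    orderOf_dvd_iff_pow_eq_one.mp
      (Nat.dvd_gcd (orderOf_dvd_of_pow_eq_one hc0m) (orderOf_dvd_of_pow_eq_one hc0n))
  have hζk : IsPrimitiveRoot (ζ : k) (Nat.gcd m n) := IsPrimitiveRoot.coe_units_iff.mpr hζ
  have hc0dk : ((c0 : k)) ^ Nat.gcd m n = 1 := by
    rw [← Units.val_pow_eq_pow_val, hc0d, Units.val_one]
  obtain ⟨b0, hb0lt, hb0k⟩ := hζk.eq_pow_of_pow_eq_one hc0dk
  have hb0 : ζ ^ b0 = c0 := Units.ext (by push_cast; exact hb0k)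
  have hdec : ∀ x : ZMod m × ZMod n, x = x.1.val • g₁ + x.2.val • g₂ := by
    intro x
    refine Prod.ext ?_ ?_
    · show x.1 = x.1.val • (1 : ZMod m) + x.2.val • (0 : ZMod m)
      rw [smul_zero, add_zero, nsmul_eq_mul, mul_one]
      exact (ZMod.natCast_rightInverse x.1).symm
    · show x.2 = x.1.val • (0 : ZMod n) + x.2.val • (1 : ZMod n)
      rw [smul_zero, zero_add, nsmul_eq_mul, mul_one]
      exact (ZMod.natCast_rightInverse x.2).symm
  have hbeta : ∀ x y : ZMod m × ZMod n,
      betaFn Φ x y = c0 ^ (x.2.val * y.1.val) * (c0 ^ (x.1.val * y.2.val))⁻¹ := by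
    intro x y
    conv_lhs => rw [hdec x, hdec y]
    rw [betaFn_add_left hcc, betaFn_add_right' hcc, betaFn_add_right' hcc,
      betaFn_nsmul_nsmul hcc hnorm, betaFn_nsmul_nsmul hcc hnorm,
      betaFn_nsmul_nsmul hcc hnorm, betaFn_nsmul_nsmul hcc hnorm,
      betaFn_self, betaFn_self, one_pow, one_pow, one_mul, mul_one,
      betaFn_swap g₁ g₂, ← hc0def, inv_pow, mul_comm]
  have hPbeta : ∀ x y : ZMod m × ZMod n,
      PhiB m n ζ b0 x y / PhiB m n ζ b0 y x
        = c0 ^ (x.2.val * y.1.val) * (c0 ^ (x.1.val * y.2.val))⁻¹ := by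
    intro x y
    show ζ ^ (b0 * x.2.val * y.1.val) / ζ ^ (b0 * y.2.val * x.1.val) = _
    rw [mul_assoc, mul_assoc, pow_mul ζ b0, pow_mul ζ b0, hb0, div_eq_mul_inv,
      mul_comm y.2.val x.1.val]
  set Ψ : ZMod m × ZMod n → ZMod m × ZMod n → kˣ :=
    fun x y => Φ x y / PhiB m n ζ b0 x y with hΨdef
  have hPcc := phiB_cross m n hm hn ζ b0 hζ
  have hΨc : ∀ x y z : ZMod m × ZMod n, Ψ y z * Ψ x (y + z) = Ψ x y * Ψ (x + y) z := by
    intro x y z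
    show Φ y z / PhiB m n ζ b0 y z * (Φ x (y + z) / PhiB m n ζ b0 x (y + z))
      = Φ x y / PhiB m n ζ b0 x y * (Φ (x + y) z / PhiB m n ζ b0 (x + y) z)
    rw [div_mul_div_comm, div_mul_div_comm, hcc x y z, hPcc x y z]
  have hΨn : ∀ x : ZMod m × ZMod n, Ψ x 0 = 1 ∧ Ψ 0 x = 1 := by
    intro x
    constructor
    · show Φ x 0 / PhiB m n ζ b0 x 0 = 1
      rw [(hnorm x).1, (phiB_norm m n ζ b0 x).1, div_one]
    · show Φ 0 x / PhiB m n ζ b0 0 x = 1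
      rw [(hnorm x).2, (phiB_norm m n ζ b0 x).2, div_one]
  have hΨs : ∀ x y : ZMod m × ZMod n, Ψ x y = Ψ y x := by
    intro x y
    show Φ x y / PhiB m n ζ b0 x y = Φ y x / PhiB m n ζ b0 y x
    rw [div_eq_div_iff_mul_eq_mul]
    have h3 : Φ x y / Φ y x = PhiB m n ζ b0 x y / PhiB m n ζ b0 y x :=
      (hbeta x y).trans (hPbeta x y).symm
    rw [div_eq_div_iff_mul_eq_mul] at h3
    rw [h3, mul_comm]
  obtain ⟨u, hu⟩ := exists_trivialization Ψ hΨc hΨn hΨs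
  have hub0 : ∀ x y : ZMod m × ZMod n,
      Φ x y / PhiB m n ζ b0 x y = u y * (u (x + y))⁻¹ * u x := fun x y =>
    (hu x y).trans (mul_rotate _ _ _)
  exact ⟨b0, ⟨hb0lt, u, hub0⟩, fun b' hb' => huniq b' b0 hb'.1 hb0lt hb'.2 ⟨u, hub0⟩⟩
end

section
/- Let m, n be positive integers, G = Z_m × Z_n, and let 0 ≤ a < m, 0 ≤ b < gcd(m,n), 0 ≤ d < n be integers. Suppose r_{11}, r_{12}, r_{21}, r_{22} ∈ k^* satisfy r_{11}^m = ζ_m^a with ζ_m^{2a} = 1, r_{22}^n = ζ_n^d with ζ_n^{2d} = 1, r_{12}^n = 1, r_{12}^m = ζ_n^{−b}, r_{21}^n = 1 and r_{21}^m = ζ_n^{b}. Then the map R: G×G → k^* defined by R(g_1^i g_2^j, g_1^s g_2^t) = r_{11}^{is} · r_{12}^{it} · r_{21}^{js} · r_{22}^{jt} (for 0 ≤ i, s < m and 0 ≤ j, t < n) is a quasi-bicharacter on G with respect to Φ_{a,b,d}. -/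
/-- The 3-cocycle
`Φ_{a,b,d}(g₁^i g₂^j, g₁^s g₂^t, g₁^k g₂^l) = ζ_m^{a·i·[(s+k)/m]} · ζ_n^{b·j·[(s+k)/m]} · ζ_n^{d·j·[(t+l)/n]}`
on `Z_m × Z_n` (written additively), with values in `kˣ`. -/
noncomputable def PhiABD {k : Type*} [Field k] (m n : ℕ) (ζm ζn : kˣ) (a b d : ℕ)
    (x y z : ZMod m × ZMod n) : kˣ :=
  ζm ^ (a * x.1.val * ((y.1.val + z.1.val) / m)) *
    ζn ^ (b * x.2.val * ((y.1.val + z.1.val) / m)) *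
    ζn ^ (d * x.2.val * ((y.2.val + z.2.val) / n))

/-- `R : G × G → kˣ` is a quasi-bicharacter with respect to a (normalized 3-cocycle)
`Φ` if `R(xy,z) = R(x,z)·R(y,z)·Φ(z,x,y)·Φ(x,y,z)·Φ(x,z,y)⁻¹` and
`R(x,yz) = R(x,y)·R(x,z)·Φ(y,x,z)·Φ(y,z,x)⁻¹·Φ(x,y,z)⁻¹` for all `x, y, z ∈ G`. -/
def IsQuasiBicharacter {G : Type*} [AddCommGroup G] {k : Type*} [Field k]
    (Φ : G → G → G → kˣ) (R : G → G → kˣ) : Prop :=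
  (∀ x y z : G,
      R (x + y) z = R x z * R y z * (Φ z x y * Φ x y z * (Φ x z y)⁻¹)) ∧
  (∀ x y z : G,
      R x (y + z) = R x y * R x z * (Φ y x z * (Φ y z x)⁻¹ * (Φ x y z)⁻¹))

private lemma master {K : Type*} [CommMonoid K] (r c : K) (M : ℕ) (h : r ^ M = c)
    (X Y q p : ℕ) (hs : X + Y = M * q + p) :
    r ^ X * r ^ Y = c ^ q * r ^ p := by
  rw [← h, ← pow_mul, ← pow_add, ← pow_add, hs]

private lemma law1 {K : Type*} [Field K] (m n a b d : ℕ)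
    (ζm ζn r11 r12 r21 r22 : K)
    (H11 : r11 ^ m = ζm ^ a) (Hm : ζm ^ (2 * a) = 1)
    (H22 : r22 ^ n = ζn ^ d) (Hn : ζn ^ (2 * d) = 1)
    (H12 : r12 ^ m * ζn ^ b = 1) (H21 : r21 ^ n = 1)
    (i j s t u v : ℕ) :
    r11 ^ ((i + s) % m * u) * r12 ^ ((i + s) % m * v) * r21 ^ ((j + t) % n * u) *
        r22 ^ ((j + t) % n * v) =
      r11 ^ (i * u) * r12 ^ (i * v) * r21 ^ (j * u) * r22 ^ (j * v) *
        (r11 ^ (s * u) * r12 ^ (s * v) * r21 ^ (t * u) * r22 ^ (t * v)) *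
        (ζm ^ (a * u * ((i + s) / m)) * ζn ^ (b * v * ((i + s) / m)) *
          ζn ^ (d * v * ((j + t) / n))) := by
  set q1 := (i + s) / m with hq1def
  set p1 := (i + s) % m with hp1def
  set q2 := (j + t) / n with hq2def
  set p2 := (j + t) % n with hp2def
  have hq1 : i + s = m * q1 + p1 := by rw [hq1def, hp1def]; exact (Nat.div_add_mod _ _).symm
  have hq2' : j + t = n * q2 + p2 := by rw [hq2def, hp2def]; exact (Nat.div_add_mod _ _).symm
  have G1 : r11 ^ (i * u) * r11 ^ (s * u) = (ζm ^ a) ^ (q1 * u) * r11 ^ (p1 * u) :=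
    master r11 (ζm ^ a) m H11 _ _ _ _ (by rw [← add_mul, hq1]; ring)
  have G2 : r12 ^ (i * v) * r12 ^ (s * v) = (r12 ^ m) ^ (q1 * v) * r12 ^ (p1 * v) :=
    master r12 (r12 ^ m) m rfl _ _ _ _ (by rw [← add_mul, hq1]; ring)
  have G3 : r21 ^ (j * u) * r21 ^ (t * u) = (1 : K) ^ (q2 * u) * r21 ^ (p2 * u) :=
    master r21 1 n H21 _ _ _ _ (by rw [← add_mul, hq2']; ring)
  have G4 : r22 ^ (j * v) * r22 ^ (t * v) = (ζn ^ d) ^ (q2 * v) * r22 ^ (p2 * v) :=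
    master r22 (ζn ^ d) n H22 _ _ _ _ (by rw [← add_mul, hq2']; ring)
  have Z1 : (ζm ^ a) ^ (q1 * u) * ζm ^ (a * u * q1) = 1 := by
    rw [← pow_mul, ← pow_add, show a * (q1 * u) + a * u * q1 = 2 * a * (q1 * u) by ring,
      pow_mul ζm (2 * a) (q1 * u), Hm, one_pow]
  have Z2 : (r12 ^ m) ^ (q1 * v) * ζn ^ (b * v * q1) = 1 := by
    rw [show b * v * q1 = b * (q1 * v) by ring, pow_mul ζn b (q1 * v), ← mul_pow, H12, one_pow]
  have Z3 : (ζn ^ d) ^ (q2 * v) * ζn ^ (d * v * q2) = 1 := by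
    rw [← pow_mul, ← pow_add, show d * (q2 * v) + d * v * q2 = 2 * d * (q2 * v) by ring,
      pow_mul ζn (2 * d) (q2 * v), Hn, one_pow]
  calc r11 ^ (p1 * u) * r12 ^ (p1 * v) * r21 ^ (p2 * u) * r22 ^ (p2 * v)
      = ((ζm ^ a) ^ (q1 * u) * ζm ^ (a * u * q1)) * ((r12 ^ m) ^ (q1 * v) * ζn ^ (b * v * q1)) *
          ((ζn ^ d) ^ (q2 * v) * ζn ^ (d * v * q2)) *
          (r11 ^ (p1 * u) * r12 ^ (p1 * v) * r21 ^ (p2 * u) * r22 ^ (p2 * v)) := by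
        rw [Z1, Z2, Z3]; ring
    _ = ((ζm ^ a) ^ (q1 * u) * r11 ^ (p1 * u)) * ((r12 ^ m) ^ (q1 * v) * r12 ^ (p1 * v)) *
          ((1 : K) ^ (q2 * u) * r21 ^ (p2 * u)) * ((ζn ^ d) ^ (q2 * v) * r22 ^ (p2 * v)) *
          (ζm ^ (a * u * q1) * ζn ^ (b * v * q1) * ζn ^ (d * v * q2)) := by ring
    _ = (r11 ^ (i * u) * r11 ^ (s * u)) * (r12 ^ (i * v) * r12 ^ (s * v)) *
          (r21 ^ (j * u) * r21 ^ (t * u)) * (r22 ^ (j * v) * r22 ^ (t * v)) *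
          (ζm ^ (a * u * q1) * ζn ^ (b * v * q1) * ζn ^ (d * v * q2)) := by
        rw [G1, G2, G3, G4]
    _ = _ := by ring

private lemma law2 {K : Type*} [Field K] (m n a b d : ℕ)
    (ζm ζn r11 r12 r21 r22 : K)
    (H11 : r11 ^ m = ζm ^ a)
    (H22 : r22 ^ n = ζn ^ d)
    (H12 : r12 ^ n = 1) (H21 : r21 ^ m = ζn ^ b)
    (i j s t u v : ℕ) :
    r11 ^ (i * ((s + u) % m)) * r12 ^ (i * ((t + v) % n)) * r21 ^ (j * ((s + u) % m)) *
        r22 ^ (j * ((t + v) % n)) *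
        (ζm ^ (a * i * ((s + u) / m)) * ζn ^ (b * j * ((s + u) / m)) *
          ζn ^ (d * j * ((t + v) / n))) =
      r11 ^ (i * s) * r12 ^ (i * t) * r21 ^ (j * s) * r22 ^ (j * t) *
        (r11 ^ (i * u) * r12 ^ (i * v) * r21 ^ (j * u) * r22 ^ (j * v)) := by
  set q1 := (s + u) / m with hq1def
  set p1 := (s + u) % m with hp1def
  set q2 := (t + v) / n with hq2def
  set p2 := (t + v) % n with hp2def
  have hq1 : s + u = m * q1 + p1 := by rw [hq1def, hp1def]; exact (Nat.div_add_mod _ _).symm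
  have hq2' : t + v = n * q2 + p2 := by rw [hq2def, hp2def]; exact (Nat.div_add_mod _ _).symm
  have G1 : r11 ^ (i * s) * r11 ^ (i * u) = (ζm ^ a) ^ (i * q1) * r11 ^ (i * p1) :=
    master r11 (ζm ^ a) m H11 _ _ _ _ (by rw [← mul_add, hq1]; ring)
  have G2 : r12 ^ (i * t) * r12 ^ (i * v) = (1 : K) ^ (i * q2) * r12 ^ (i * p2) :=
    master r12 1 n H12 _ _ _ _ (by rw [← mul_add, hq2']; ring)
  have G3 : r21 ^ (j * s) * r21 ^ (j * u) = (ζn ^ b) ^ (j * q1) * r21 ^ (j * p1) :=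
    master r21 (ζn ^ b) m H21 _ _ _ _ (by rw [← mul_add, hq1]; ring)
  have G4 : r22 ^ (j * t) * r22 ^ (j * v) = (ζn ^ d) ^ (j * q2) * r22 ^ (j * p2) :=
    master r22 (ζn ^ d) n H22 _ _ _ _ (by rw [← mul_add, hq2']; ring)
  have W1 : (ζm ^ a) ^ (i * q1) = ζm ^ (a * i * q1) := by
    rw [← pow_mul, show a * (i * q1) = a * i * q1 by ring]
  have W2 : (ζn ^ b) ^ (j * q1) = ζn ^ (b * j * q1) := by
    rw [← pow_mul, show b * (j * q1) = b * j * q1 by ring]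
  have W3 : (ζn ^ d) ^ (j * q2) = ζn ^ (d * j * q2) := by
    rw [← pow_mul, show d * (j * q2) = d * j * q2 by ring]
  calc r11 ^ (i * p1) * r12 ^ (i * p2) * r21 ^ (j * p1) * r22 ^ (j * p2) *
        (ζm ^ (a * i * q1) * ζn ^ (b * j * q1) * ζn ^ (d * j * q2))
      = ((ζm ^ a) ^ (i * q1) * r11 ^ (i * p1)) * ((1 : K) ^ (i * q2) * r12 ^ (i * p2)) *
          ((ζn ^ b) ^ (j * q1) * r21 ^ (j * p1)) * ((ζn ^ d) ^ (j * q2) * r22 ^ (j * p2)) := by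
        rw [W1, W2, W3]; ring
    _ = (r11 ^ (i * s) * r11 ^ (i * u)) * (r12 ^ (i * t) * r12 ^ (i * v)) *
          (r21 ^ (j * s) * r21 ^ (j * u)) * (r22 ^ (j * t) * r22 ^ (j * v)) := by
        rw [G1, G2, G3, G4]
    _ = _ := by ring

/-- If `r₁₁, r₁₂, r₂₁, r₂₂ ∈ kˣ` satisfy `r₁₁^m = ζ_m^a` with
`ζ_m^{2a} = 1`, `r₂₂^n = ζ_n^d` with `ζ_n^{2d} = 1`, `r₁₂^n = 1`, `r₁₂^m = ζ_n^{−b}`,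
`r₂₁^n = 1` and `r₂₁^m = ζ_n^{b}`, then
`R(g₁^i g₂^j, g₁^s g₂^t) = r₁₁^{is}·r₁₂^{it}·r₂₁^{js}·r₂₂^{jt}` is a quasi-bicharacter
on `Z_m × Z_n` with respect to `Φ_{a,b,d}`. -/
theorem statement13 (k : Type*) [Field k] [IsAlgClosed k] [CharZero k]
    (m n : ℕ) (hm : 0 < m) (hn : 0 < n)
    (ζm ζn : kˣ) (hζm : IsPrimitiveRoot ζm m) (hζn : IsPrimitiveRoot ζn n)
    (a b d : ℕ) (ha : a < m) (hb : b < Nat.gcd m n) (hd : d < n)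
    (r11 r12 r21 r22 : kˣ)
    (h11 : r11 ^ m = ζm ^ a) (h11' : ζm ^ (2 * a) = 1)
    (h22 : r22 ^ n = ζn ^ d) (h22' : ζn ^ (2 * d) = 1)
    (h12n : r12 ^ n = 1) (h12m : r12 ^ m = (ζn ^ b)⁻¹)
    (h21n : r21 ^ n = 1) (h21m : r21 ^ m = ζn ^ b) :
    IsQuasiBicharacter (PhiABD m n ζm ζn a b d)
      (fun x y : ZMod m × ZMod n =>
        r11 ^ (x.1.val * y.1.val) * r12 ^ (x.1.val * y.2.val) *
          r21 ^ (x.2.val * y.1.val) * r22 ^ (x.2.val * y.2.val)) := by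
  haveI : NeZero m := ⟨hm.ne'⟩
  haveI : NeZero n := ⟨hn.ne'⟩
  have H11 := congrArg Units.val h11
  have Hm := congrArg Units.val h11'
  have H22 := congrArg Units.val h22
  have Hn := congrArg Units.val h22'
  have h12b : r12 ^ m * ζn ^ b = 1 := by rw [h12m]; exact inv_mul_cancel _
  have H12 := congrArg Units.val h12b
  have H21 := congrArg Units.val h21n
  have H12n := congrArg Units.val h12n
  have H21m := congrArg Units.val h21m
  push_cast at H11 Hm H22 Hn H12 H21 H12n H21m
  refine ⟨fun x y z => ?_, fun x y z => ?_⟩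
  · have hc : PhiABD m n ζm ζn a b d x z y = PhiABD m n ζm ζn a b d x y z := by
      simp only [PhiABD]
      rw [Nat.add_comm z.1.val y.1.val, Nat.add_comm z.2.val y.2.val]
    rw [hc, mul_inv_cancel_right]
    simp only [PhiABD, Prod.fst_add, Prod.snd_add, ZMod.val_add]
    exact Units.ext (by
      push_cast
      exact law1 m n a b d _ _ _ _ _ _ H11 Hm H22 Hn H12 H21 _ _ _ _ _ _)
  · have hc : PhiABD m n ζm ζn a b d y z x = PhiABD m n ζm ζn a b d y x z := by
      simp only [PhiABD]
      rw [Nat.add_comm z.1.val x.1.val, Nat.add_comm z.2.val x.2.val]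
    rw [hc, mul_inv_cancel, one_mul, eq_mul_inv_iff_mul_eq]
    simp only [PhiABD, Prod.fst_add, Prod.snd_add, ZMod.val_add]
    exact Units.ext (by
      push_cast
      exact law2 m n a b d _ _ _ _ _ _ H11 H22 H12n H21m _ _ _ _ _ _)
end

section
/- Let m, n be positive integers, G = Z_m × Z_n, and let 0 ≤ a < m, 0 ≤ b < gcd(m,n), 0 ≤ d < n be integers. If R: G×G → k^* is a quasi-bicharacter with respect to Φ_{a,b,d}, then, setting r_{11} = R(g_1,g_1), r_{12} = R(g_1,g_2), r_{21} = R(g_2,g_1), r_{22} = R(g_2,g_2), the following hold: r_{11}^m = ζ_m^a and ζ_m^{2a} = 1; r_{22}^n = ζ_n^d and ζ_n^{2d} = 1; r_{12}^n = 1 and r_{12}^m = ζ_n^{−b}; r_{21}^n = 1 and r_{21}^m = ζ_n^{b}. -/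
/-- A multiplicative "telescoping" lemma. -/
lemma chainPow {k : Type*} [Field k] (f w : ℕ → kˣ) (c : kˣ) (h0 : f 0 = 1)
    (hs : ∀ j, f (j+1) = f j * c * w j) (N : ℕ) :
    f N = c ^ N * ∏ j ∈ Finset.range N, w j := by
  induction N with
  | zero => simpa using h0
  | succ N ih =>
    rw [hs, ih, Finset.prod_range_succ, pow_succ]
    simp [mul_assoc, mul_comm, mul_left_comm]

lemma sumEval {m : ℕ} (hm : 2 ≤ m) (C : ℕ) :
    ∑ j ∈ Finset.range m, C * ((j % m + 1 % m) / m) = C := by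
  have h1 : 1 % m = 1 := Nat.mod_eq_of_lt hm
  calc ∑ j ∈ Finset.range m, C * ((j % m + 1 % m) / m)
      = ∑ j ∈ Finset.range m, if j = m - 1 then C else 0 := by
        refine Finset.sum_congr rfl fun j hj => ?_
        rw [Finset.mem_range] at hj
        rw [h1, Nat.mod_eq_of_lt hj]
        rcases eq_or_ne j (m - 1) with h | h
        · rw [if_pos h, h, Nat.sub_add_cancel (by omega), Nat.div_self (by omega), mul_one]
        · rw [if_neg h, Nat.div_eq_of_lt (by omega), mul_zero]
    _ = C := by rw [Finset.sum_ite_eq' (Finset.range m) (m-1) fun _ => C]; simp; omega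

/-- If `R` is a quasi-bicharacter on `Z_m × Z_n` with respect to
`Φ_{a,b,d}` then, with `r₁₁ = R(g₁,g₁)`, `r₁₂ = R(g₁,g₂)`, `r₂₁ = R(g₂,g₁)`,
`r₂₂ = R(g₂,g₂)`: `r₁₁^m = ζ_m^a` and `ζ_m^{2a} = 1`; `r₂₂^n = ζ_n^d` and `ζ_n^{2d} = 1`;
`r₁₂^n = 1` and `r₁₂^m = ζ_n^{−b}`; `r₂₁^n = 1` and `r₂₁^m = ζ_n^{b}`. -/
theorem statement14 (k : Type*) [Field k] [IsAlgClosed k] [CharZero k]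
    (m n : ℕ) (hm : 0 < m) (hn : 0 < n)
    (ζm ζn : kˣ) (hζm : IsPrimitiveRoot ζm m) (hζn : IsPrimitiveRoot ζn n)
    (a b d : ℕ) (ha : a < m) (hb : b < Nat.gcd m n) (hd : d < n)
    (R : ZMod m × ZMod n → ZMod m × ZMod n → kˣ)
    (hR : IsQuasiBicharacter (PhiABD m n ζm ζn a b d) R) :
    (R ((1 : ZMod m), (0 : ZMod n)) ((1 : ZMod m), (0 : ZMod n)) ^ m = ζm ^ a ∧
      ζm ^ (2 * a) = 1) ∧
    (R ((0 : ZMod m), (1 : ZMod n)) ((0 : ZMod m), (1 : ZMod n)) ^ n = ζn ^ d ∧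
      ζn ^ (2 * d) = 1) ∧
    (R ((1 : ZMod m), (0 : ZMod n)) ((0 : ZMod m), (1 : ZMod n)) ^ n = 1 ∧
      R ((1 : ZMod m), (0 : ZMod n)) ((0 : ZMod m), (1 : ZMod n)) ^ m = (ζn ^ b)⁻¹) ∧
    (R ((0 : ZMod m), (1 : ZMod n)) ((1 : ZMod m), (0 : ZMod n)) ^ n = 1 ∧
      R ((0 : ZMod m), (1 : ZMod n)) ((1 : ZMod m), (0 : ZMod n)) ^ m = ζn ^ b) := by
  haveI : NeZero m := ⟨hm.ne'⟩
  haveI : NeZero n := ⟨hn.ne'⟩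
  obtain ⟨hR1, hR2⟩ := hR
  have h1m : 1 % m / m = 0 := Nat.div_eq_of_lt (Nat.mod_lt 1 hm)
  have h1n : 1 % n / n = 0 := Nat.div_eq_of_lt (Nat.mod_lt 1 hn)
  -- degenerate facts
  have hζm1 : m = 1 → ζm = 1 := fun h => by
    have := hζm.pow_eq_one; rw [h, pow_one] at this; exact this
  have hζn1 : n = 1 → ζn = 1 := fun h => by
    have := hζn.pow_eq_one; rw [h, pow_one] at this; exact this
  have hb0 : m = 1 ∨ n = 1 → b = 0 := by
    intro h; rcases h with h | h <;> simp [h] at hb <;> omega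
  -- R vanishes on zero arguments
  have hz1 : ∀ z, R 0 z = 1 := by
    intro z
    have h := hR1 0 0 z
    simpa [PhiABD] using h
  have hz2 : ∀ x, R x 0 = 1 := by
    intro x
    have h := hR2 x 0 0
    simpa [PhiABD] using h
  -- pair addition lemmas
  have haddm : ∀ j : ℕ, (((j:ℕ):ZMod m), (0:ZMod n)) + (1,0) = (((j+1:ℕ):ZMod m), 0) := by
    intro j; simp [Prod.ext_iff]
  have haddn : ∀ j : ℕ, ((0:ZMod m), ((j:ℕ):ZMod n)) + (0,1) = (0, ((j+1:ℕ):ZMod n)) := by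
    intro j; simp [Prod.ext_iff]
  set r11 := R ((1:ZMod m), (0:ZMod n)) ((1:ZMod m), (0:ZMod n)) with hr11
  set r22 := R ((0:ZMod m), (1:ZMod n)) ((0:ZMod m), (1:ZMod n)) with hr22
  set r12 := R ((1:ZMod m), (0:ZMod n)) ((0:ZMod m), (1:ZMod n)) with hr12
  set r21 := R ((0:ZMod m), (1:ZMod n)) ((1:ZMod m), (0:ZMod n)) with hr21
  -- evaluation of the two key power sums
  have hSm : (ζm : kˣ) ^ (∑ j ∈ Finset.range m, a * (1 % m) * ((j % m + 1 % m) / m)) = ζm ^ a := by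
    rcases eq_or_lt_of_le (Nat.one_le_iff_ne_zero.mpr hm.ne') with h | h
    · have ha0 : a = 0 := by omega
      simp [hζm1 h.symm, ha0]
    · rw [sumEval h (a * (1 % m)), Nat.mod_eq_of_lt h, mul_one]
  have hSn : (ζn : kˣ) ^ (∑ j ∈ Finset.range n, d * (1 % n) * ((j % n + 1 % n) / n)) = ζn ^ d := by
    rcases eq_or_lt_of_le (Nat.one_le_iff_ne_zero.mpr hn.ne') with h | h
    · have hd0 : d = 0 := by omega
      simp [hζn1 h.symm, hd0]
    · rw [sumEval h (d * (1 % n)), Nat.mod_eq_of_lt h, mul_one]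
  have hSb : (ζn : kˣ) ^ (∑ j ∈ Finset.range m, b * (1 % n) * ((j % m + 1 % m) / m)) = ζn ^ b := by
    rcases eq_or_lt_of_le (Nat.one_le_iff_ne_zero.mpr hm.ne') with h | h
    · simp [hb0 (Or.inl h.symm)]
    · rw [sumEval h (b * (1 % n))]
      rcases eq_or_lt_of_le (Nat.one_le_iff_ne_zero.mpr hn.ne') with h' | h'
      · simp [hζn1 h'.symm]
      · rw [Nat.mod_eq_of_lt h', mul_one]
  -- Chain A
  have chA : (1 : kˣ) = r11 ^ m * ζm ^ a := by
    have key := chainPow (fun j => R (((j:ℕ) : ZMod m), 0) (1, 0))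
      (fun j => ζm ^ (a * (1 % m) * ((j % m + 1 % m) / m))) r11
      (by simpa [Prod.mk_zero_zero] using hz1 ((1:ZMod m),(0:ZMod n)))
      (fun j => by
        show R (((j+1:ℕ) : ZMod m), 0) (1, 0) = R (((j:ℕ) : ZMod m), 0) (1, 0) * r11 * ζm ^ (a * (1 % m) * ((j % m + 1 % m) / m))
        have h := hR1 (((j:ℕ):ZMod m), 0) (1,0) (1,0)
        rw [haddm j] at h
        rw [h]
        simp [PhiABD, ZMod.val_natCast, ZMod.val_one_eq_one_mod, h1m, h1n]; rfl) m
    rw [Finset.prod_pow_eq_pow_sum, hSm] at key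
    calc (1 : kˣ) = R (((m:ℕ) : ZMod m), 0) (1, 0) := by
          rw [ZMod.natCast_self]
          exact (hz1 _).symm
      _ = r11 ^ m * ζm ^ a := key
  -- Chain B
  have chB : (1 : kˣ) = r11 ^ m * (ζm ^ a)⁻¹ := by
    have key := chainPow (fun j => R (1, 0) (((j:ℕ) : ZMod m), 0))
      (fun j => (ζm⁻¹) ^ (a * (1 % m) * ((j % m + 1 % m) / m))) r11
      (by simpa [Prod.mk_zero_zero] using hz2 ((1:ZMod m),(0:ZMod n)))
      (fun j => by
        show R (1, 0) (((j+1:ℕ) : ZMod m), 0) = R (1, 0) (((j:ℕ) : ZMod m), 0) * r11 * (ζm⁻¹) ^ (a * (1 % m) * ((j % m + 1 % m) / m))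
        have h := hR2 (1,0) (((j:ℕ):ZMod m), 0) (1,0)
        rw [haddm j] at h
        rw [h]
        simp [PhiABD, ZMod.val_natCast, ZMod.val_one_eq_one_mod, h1m, h1n, inv_pow]; rfl) m
    rw [Finset.prod_pow_eq_pow_sum, inv_pow, hSm] at key
    calc (1 : kˣ) = R (1, 0) (((m:ℕ) : ZMod m), 0) := by
          rw [ZMod.natCast_self]
          exact (hz2 _).symm
      _ = r11 ^ m * (ζm ^ a)⁻¹ := key
  -- Chain C
  have chC : (1 : kˣ) = r22 ^ n * ζn ^ d := by
    have key := chainPow (fun j => R (0, ((j:ℕ) : ZMod n)) (0, 1))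
      (fun j => ζn ^ (d * (1 % n) * ((j % n + 1 % n) / n))) r22
      (by simpa [Prod.mk_zero_zero] using hz1 ((0:ZMod m),(1:ZMod n)))
      (fun j => by
        show R (0, ((j+1:ℕ) : ZMod n)) (0, 1) = R (0, ((j:ℕ) : ZMod n)) (0, 1) * r22 * ζn ^ (d * (1 % n) * ((j % n + 1 % n) / n))
        have h := hR1 (0, ((j:ℕ):ZMod n)) (0,1) (0,1)
        rw [haddn j] at h
        rw [h]
        simp [PhiABD, ZMod.val_natCast, ZMod.val_one_eq_one_mod, h1m, h1n]; rfl) n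
    rw [Finset.prod_pow_eq_pow_sum, hSn] at key
    calc (1 : kˣ) = R (0, ((n:ℕ) : ZMod n)) (0, 1) := by
          rw [ZMod.natCast_self]
          exact (hz1 _).symm
      _ = r22 ^ n * ζn ^ d := key
  -- Chain D
  have chD : (1 : kˣ) = r22 ^ n * (ζn ^ d)⁻¹ := by
    have key := chainPow (fun j => R (0, 1) (0, ((j:ℕ) : ZMod n)))
      (fun j => (ζn⁻¹) ^ (d * (1 % n) * ((j % n + 1 % n) / n))) r22
      (by simpa [Prod.mk_zero_zero] using hz2 ((0:ZMod m),(1:ZMod n)))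
      (fun j => by
        show R (0, 1) (0, ((j+1:ℕ) : ZMod n)) = R (0, 1) (0, ((j:ℕ) : ZMod n)) * r22 * (ζn⁻¹) ^ (d * (1 % n) * ((j % n + 1 % n) / n))
        have h := hR2 (0,1) (0, ((j:ℕ):ZMod n)) (0,1)
        rw [haddn j] at h
        rw [h]
        simp [PhiABD, ZMod.val_natCast, ZMod.val_one_eq_one_mod, h1m, h1n, inv_pow]; rfl) n
    rw [Finset.prod_pow_eq_pow_sum, inv_pow, hSn] at key
    calc (1 : kˣ) = R (0, 1) (0, ((n:ℕ) : ZMod n)) := by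
          rw [ZMod.natCast_self]
          exact (hz2 _).symm
      _ = r22 ^ n * (ζn ^ d)⁻¹ := key
  -- Chain E
  have chE : (1 : kˣ) = r12 ^ n := by
    have key := chainPow (fun j => R (1, 0) (0, ((j:ℕ) : ZMod n)))
      (fun j => (1 : kˣ)) r12
      (by simpa [Prod.mk_zero_zero] using hz2 ((1:ZMod m),(0:ZMod n)))
      (fun j => by
        show R (1, 0) (0, ((j+1:ℕ) : ZMod n)) = R (1, 0) (0, ((j:ℕ) : ZMod n)) * r12 * (1 : kˣ)
        have h := hR2 (1,0) (0, ((j:ℕ):ZMod n)) (0,1)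
        rw [haddn j] at h
        rw [h]
        simp [PhiABD, ZMod.val_natCast, ZMod.val_one_eq_one_mod, h1m, h1n]; rfl) n
    simp only [Finset.prod_const_one, mul_one] at key
    calc (1 : kˣ) = R (1, 0) (0, ((n:ℕ) : ZMod n)) := by
          rw [ZMod.natCast_self]
          exact (hz2 _).symm
      _ = r12 ^ n := key
  -- Chain F
  have chF : (1 : kˣ) = r12 ^ m * ζn ^ b := by
    have key := chainPow (fun j => R (((j:ℕ) : ZMod m), 0) (0, 1))
      (fun j => ζn ^ (b * (1 % n) * ((j % m + 1 % m) / m))) r12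
      (by simpa [Prod.mk_zero_zero] using hz1 ((0:ZMod m),(1:ZMod n)))
      (fun j => by
        show R (((j+1:ℕ) : ZMod m), 0) (0, 1) = R (((j:ℕ) : ZMod m), 0) (0, 1) * r12 * ζn ^ (b * (1 % n) * ((j % m + 1 % m) / m))
        have h := hR1 (((j:ℕ):ZMod m), 0) (1,0) (0,1)
        rw [haddm j] at h
        rw [h]
        simp [PhiABD, ZMod.val_natCast, ZMod.val_one_eq_one_mod, h1m, h1n]; rfl) m
    rw [Finset.prod_pow_eq_pow_sum, hSb] at key
    calc (1 : kˣ) = R (((m:ℕ) : ZMod m), 0) (0, 1) := by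
          rw [ZMod.natCast_self]
          exact (hz1 _).symm
      _ = r12 ^ m * ζn ^ b := key
  -- Chain G
  have chG : (1 : kˣ) = r21 ^ n := by
    have key := chainPow (fun j => R (0, ((j:ℕ) : ZMod n)) (1, 0))
      (fun j => (1 : kˣ)) r21
      (by simpa [Prod.mk_zero_zero] using hz1 ((1:ZMod m),(0:ZMod n)))
      (fun j => by
        show R (0, ((j+1:ℕ) : ZMod n)) (1, 0) = R (0, ((j:ℕ) : ZMod n)) (1, 0) * r21 * (1 : kˣ)
        have h := hR1 (0, ((j:ℕ):ZMod n)) (0,1) (1,0)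
        rw [haddn j] at h
        rw [h]
        simp [PhiABD, ZMod.val_natCast, ZMod.val_one_eq_one_mod, h1m, h1n]; rfl) n
    simp only [Finset.prod_const_one, mul_one] at key
    calc (1 : kˣ) = R (0, ((n:ℕ) : ZMod n)) (1, 0) := by
          rw [ZMod.natCast_self]
          exact (hz1 _).symm
      _ = r21 ^ n := key
  -- Chain H
  have chH : (1 : kˣ) = r21 ^ m * (ζn ^ b)⁻¹ := by
    have key := chainPow (fun j => R (0, 1) (((j:ℕ) : ZMod m), 0))
      (fun j => (ζn⁻¹) ^ (b * (1 % n) * ((j % m + 1 % m) / m))) r21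
      (by simpa [Prod.mk_zero_zero] using hz2 ((0:ZMod m),(1:ZMod n)))
      (fun j => by
        show R (0, 1) (((j+1:ℕ) : ZMod m), 0) = R (0, 1) (((j:ℕ) : ZMod m), 0) * r21 * (ζn⁻¹) ^ (b * (1 % n) * ((j % m + 1 % m) / m))
        have h := hR2 (0,1) (((j:ℕ):ZMod m), 0) (1,0)
        rw [haddm j] at h
        rw [h]
        simp [PhiABD, ZMod.val_natCast, ZMod.val_one_eq_one_mod, h1m, h1n, inv_pow]; rfl) m
    rw [Finset.prod_pow_eq_pow_sum, inv_pow, hSb] at key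
    calc (1 : kˣ) = R (0, 1) (((m:ℕ) : ZMod m), 0) := by
          rw [ZMod.natCast_self]
          exact (hz2 _).symm
      _ = r21 ^ m * (ζn ^ b)⁻¹ := key
  -- conclude
  have e11 : r11 ^ m = ζm ^ a := mul_inv_eq_one.mp chB.symm
  have e11' : r11 ^ m = (ζm ^ a)⁻¹ := eq_inv_of_mul_eq_one_left chA.symm
  have e2a : ζm ^ (2 * a) = 1 := by
    rw [two_mul, pow_add]
    exact mul_eq_one_iff_eq_inv.mpr (e11.symm.trans e11')
  have e22 : r22 ^ n = ζn ^ d := mul_inv_eq_one.mp chD.symm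
  have e22' : r22 ^ n = (ζn ^ d)⁻¹ := eq_inv_of_mul_eq_one_left chC.symm
  have e2d : ζn ^ (2 * d) = 1 := by
    rw [two_mul, pow_add]
    exact mul_eq_one_iff_eq_inv.mpr (e22.symm.trans e22')
  have e12m : r12 ^ m = (ζn ^ b)⁻¹ := eq_inv_of_mul_eq_one_left chF.symm
  have e21m : r21 ^ m = ζn ^ b := mul_inv_eq_one.mp chH.symm
  exact ⟨⟨e11, e2a⟩, ⟨e22, e2d⟩, ⟨chE.symm, e12m⟩, ⟨chG.symm, e21m⟩⟩
end

section
/- Let m, n be positive integers, G = Z_m × Z_n, and let 0 ≤ a < m, 0 ≤ b < gcd(m,n), 0 ≤ d < n be integers. If there exists a quasi-bicharacter R: G×G → k^* with respect to Φ_{a,b,d}, then m divides 2a and n divides 2d; that is, either a = 0, or m is even and a = m/2, and likewise either d = 0, or n is even and d = n/2. -/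
private lemma aux_cyclic {k : Type*} [Field k] {G : Type*} [AddCommGroup G]
    (R : G → G → kˣ) (g : G) (m : ℕ) (hm : 2 ≤ m) (ζ : kˣ) (a : ℕ)
    (h0 : R 0 g = 1) (h0' : R g 0 = 1) (hg : m • g = 0)
    (hstep1 : ∀ i : ℕ, R ((i + 1) • g) g = R (i • g) g * R g g * ζ ^ (a * ((i % m + 1) / m)))
    (hstep2 : ∀ i : ℕ, R g ((i + 1) • g) = R g (i • g) * R g g * (ζ ^ (a * ((i % m + 1) / m)))⁻¹) :
    ζ ^ (2 * a) = 1 := by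
  have key1 : ∀ i, i < m → R (i • g) g = R g g ^ i := by
    intro i
    induction i with
    | zero => intro _; simpa using h0
    | succ i ih =>
      intro h
      have h1 := hstep1 i
      rw [ih (by omega), Nat.mod_eq_of_lt (by omega), Nat.div_eq_of_lt (by omega),
        Nat.mul_zero, pow_zero, mul_one] at h1
      rw [h1, pow_succ]
  have key2 : ∀ i, i < m → R g (i • g) = R g g ^ i := by
    intro i
    induction i with
    | zero => intro _; simpa using h0'
    | succ i ih =>
      intro h
      have h1 := hstep2 i
      rw [ih (by omega), Nat.mod_eq_of_lt (by omega), Nat.div_eq_of_lt (by omega),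
        Nat.mul_zero, pow_zero, inv_one, mul_one] at h1
      rw [h1, pow_succ]
  have hexp : ((m - 1) % m + 1) / m = 1 := by
    rw [Nat.mod_eq_of_lt (by omega), Nat.sub_add_cancel (by omega), Nat.div_self (by omega)]
  have hsub : m - 1 + 1 = m := by omega
  have f1 : (1 : kˣ) = R g g ^ m * ζ ^ a := by
    have h1 := hstep1 (m - 1)
    rw [key1 (m - 1) (by omega), hexp, Nat.mul_one, hsub, hg, h0, ← pow_succ, hsub] at h1
    exact h1
  have f2 : R g g ^ m = ζ ^ a := by
    have h1 := hstep2 (m - 1)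
    rw [key2 (m - 1) (by omega), hexp, Nat.mul_one, hsub, hg, h0', ← pow_succ, hsub] at h1
    have := h1.symm
    rw [mul_inv_eq_one] at this
    exact this
  rw [f2] at f1
  rw [two_mul, pow_add]
  exact f1.symm

/-- If there exists a quasi-bicharacter on `Z_m × Z_n` with respect to
`Φ_{a,b,d}`, then `m ∣ 2a` and `n ∣ 2d`; that is, either `a = 0`, or `m` is even and
`a = m/2`, and likewise either `d = 0`, or `n` is even and `d = n/2`. -/
theorem statement15 (k : Type*) [Field k] [IsAlgClosed k] [CharZero k]
    (m n : ℕ) (hm : 0 < m) (hn : 0 < n)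
    (ζm ζn : kˣ) (hζm : IsPrimitiveRoot ζm m) (hζn : IsPrimitiveRoot ζn n)
    (a b d : ℕ) (ha : a < m) (hb : b < Nat.gcd m n) (hd : d < n)
    (R : ZMod m × ZMod n → ZMod m × ZMod n → kˣ)
    (hR : IsQuasiBicharacter (PhiABD m n ζm ζn a b d) R) :
    (m ∣ 2 * a ∧ n ∣ 2 * d) ∧
      (a = 0 ∨ (m % 2 = 0 ∧ a = m / 2)) ∧ (d = 0 ∨ (n % 2 = 0 ∧ d = n / 2)) := by
  haveI : NeZero m := ⟨hm.ne'⟩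
  haveI : NeZero n := ⟨hn.ne'⟩
  obtain ⟨hadd, hmul⟩ := hR
  have hsymm : ∀ x y z, PhiABD m n ζm ζn a b d x y z = PhiABD m n ζm ζn a b d x z y := by
    intro x y z
    simp only [PhiABD]
    rw [add_comm z.1.val y.1.val, add_comm z.2.val y.2.val]
  have hadd' : ∀ x y z, R (x + y) z
      = R x z * R y z * PhiABD m n ζm ζn a b d z x y := by
    intro x y z
    rw [hadd x y z, hsymm x y z]
    group
  have hmul' : ∀ x y z, R x (y + z)
      = R x y * R x z * (PhiABD m n ζm ζn a b d x y z)⁻¹ := by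
    intro x y z
    rw [hmul x y z, hsymm y x z]
    group
  have R0 : ∀ z, R 0 z = 1 := by
    intro z
    have h := hadd' 0 0 z
    have hφ : PhiABD m n ζm ζn a b d z 0 0 = 1 := by
      simp [PhiABD]
    rw [add_zero, hφ, mul_one] at h
    exact right_eq_mul.mp h
  have Rx0 : ∀ x, R x 0 = 1 := by
    intro x
    have h := hmul' x 0 0
    have hφ : PhiABD m n ζm ζn a b d x 0 0 = 1 := by
      simp [PhiABD]
    rw [add_zero, hφ, inv_one, mul_one] at h
    exact right_eq_mul.mp h
  have hma : m ∣ 2 * a := by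
    rcases Nat.lt_or_ge m 2 with h2 | h2
    · have : a = 0 := by omega
      simp [this]
    · haveI : Fact (1 < m) := ⟨h2⟩
      have hv1 : (1 : ZMod m).val = 1 := ZMod.val_one m
      set g : ZMod m × ZMod n := ((1 : ZMod m), (0 : ZMod n)) with hgdef
      have hsm : ∀ i : ℕ, i • g = (((i : ℕ) : ZMod m), (0 : ZMod n)) := by
        intro i
        simp [hgdef, Prod.smul_def, nsmul_eq_mul]
      have hg : m • g = 0 := by
        rw [hsm]
        simp [Prod.ext_iff, ZMod.natCast_self]
      have hΦ1 : ∀ i : ℕ, PhiABD m n ζm ζn a b d g (((i : ℕ) : ZMod m), (0 : ZMod n)) g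
          = ζm ^ (a * ((i % m + 1) / m)) := by
        intro i
        simp [PhiABD, hgdef, ZMod.val_natCast, hv1]
      have hx : ∀ i : ℕ,
          ((((i : ℕ) : ZMod m), (0 : ZMod n)) : ZMod m × ZMod n) + g
            = (((i + 1 : ℕ) : ZMod m), (0 : ZMod n)) := by
        intro i
        simp [hgdef, Prod.ext_iff]
      have hstep1 : ∀ i : ℕ, R ((i + 1) • g) g
          = R (i • g) g * R g g * ζm ^ (a * ((i % m + 1) / m)) := by
        intro i
        have h := hadd' (((i : ℕ) : ZMod m), (0 : ZMod n)) g g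
        rw [hx i, hΦ1 i] at h
        rw [hsm (i + 1), hsm i]
        exact h
      have hstep2 : ∀ i : ℕ, R g ((i + 1) • g)
          = R g (i • g) * R g g * (ζm ^ (a * ((i % m + 1) / m)))⁻¹ := by
        intro i
        have h := hmul' g (((i : ℕ) : ZMod m), (0 : ZMod n)) g
        rw [hx i, hΦ1 i] at h
        rw [hsm (i + 1), hsm i]
        exact h
      have := aux_cyclic R g m h2 ζm a (R0 g) (Rx0 g) hg hstep1 hstep2
      exact hζm.dvd_of_pow_eq_one _ this
  have hnd : n ∣ 2 * d := by
    rcases Nat.lt_or_ge n 2 with h2 | h2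
    · have : d = 0 := by omega
      simp [this]
    · haveI : Fact (1 < n) := ⟨h2⟩
      have hv1 : (1 : ZMod n).val = 1 := ZMod.val_one n
      set g : ZMod m × ZMod n := ((0 : ZMod m), (1 : ZMod n)) with hgdef
      have hsm : ∀ i : ℕ, i • g = ((0 : ZMod m), ((i : ℕ) : ZMod n)) := by
        intro i
        simp [hgdef, Prod.smul_def, nsmul_eq_mul]
      have hg : n • g = 0 := by
        rw [hsm]
        simp [Prod.ext_iff, ZMod.natCast_self]
      have hΦ1 : ∀ i : ℕ, PhiABD m n ζm ζn a b d g ((0 : ZMod m), ((i : ℕ) : ZMod n)) g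
          = ζn ^ (d * ((i % n + 1) / n)) := by
        intro i
        simp [PhiABD, hgdef, ZMod.val_natCast, hv1]
      have hx : ∀ i : ℕ,
          (((0 : ZMod m), ((i : ℕ) : ZMod n)) : ZMod m × ZMod n) + g
            = ((0 : ZMod m), ((i + 1 : ℕ) : ZMod n)) := by
        intro i
        simp [hgdef, Prod.ext_iff]
      have hstep1 : ∀ i : ℕ, R ((i + 1) • g) g
          = R (i • g) g * R g g * ζn ^ (d * ((i % n + 1) / n)) := by
        intro i
        have h := hadd' ((0 : ZMod m), ((i : ℕ) : ZMod n)) g g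
        rw [hx i, hΦ1 i] at h
        rw [hsm (i + 1), hsm i]
        exact h
      have hstep2 : ∀ i : ℕ, R g ((i + 1) • g)
          = R g (i • g) * R g g * (ζn ^ (d * ((i % n + 1) / n)))⁻¹ := by
        intro i
        have h := hmul' g ((0 : ZMod m), ((i : ℕ) : ZMod n)) g
        rw [hx i, hΦ1 i] at h
        rw [hsm (i + 1), hsm i]
        exact h
      have := aux_cyclic R g n h2 ζn d (R0 g) (Rx0 g) hg hstep1 hstep2
      exact hζn.dvd_of_pow_eq_one _ this
  refine ⟨⟨hma, hnd⟩, ?_, ?_⟩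
  · obtain ⟨c, hc⟩ := hma
    have hc2 : c < 2 := by
      by_contra hcc
      push_neg at hcc
      have : m * 2 ≤ m * c := Nat.mul_le_mul_left m hcc
      omega
    interval_cases c <;> omega
  · obtain ⟨c, hc⟩ := hnd
    have hc2 : c < 2 := by
      by_contra hcc
      push_neg at hcc
      have : n * 2 ≤ n * c := Nat.mul_le_mul_left n hcc
      omega
    interval_cases c <;> omega
end

section
/- Let m, n be positive integers, G = Z_m × Z_n, and let 0 ≤ a < m, 0 ≤ b < gcd(m,n), 0 ≤ d < n be integers. Suppose r_{11}, r_{12}, r_{21}, r_{22} ∈ k^* satisfy r_{11}^m = ζ_m^a with ζ_m^{2a} = 1, r_{22}^n = ζ_n^d with ζ_n^{2d} = 1, r_{12}^n = 1, r_{12}^m = ζ_n^{−b}, r_{21}^n = 1 and r_{21}^m = ζ_n^{b}, and let R: G×G → k^* be the quasi-bicharacter with respect to Φ_{a,b,d} given by R(g_1^i g_2^j, g_1^s g_2^t) = r_{11}^{is} · r_{12}^{it} · r_{21}^{js} · r_{22}^{jt} (for 0 ≤ i, s < m and 0 ≤ j, t < n). Then R is skew-symmetric, i.e., R(x,y)·R(y,x)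 = 1 for all x, y ∈ G, if and only if r_{11}^2 = 1, r_{22}^2 = 1 and r_{12}·r_{21} = 1. -/
/-- Let `r₁₁, r₁₂, r₂₁, r₂₂ ∈ kˣ` satisfy the conditions of equation
(3.14) and let `R(g₁^i g₂^j, g₁^s g₂^t) = r₁₁^{is}·r₁₂^{it}·r₂₁^{js}·r₂₂^{jt}` be the
corresponding quasi-bicharacter with respect to `Φ_{a,b,d}`.  Then `R` is
skew-symmetric, i.e. `R(x,y)·R(y,x) = 1` for all `x, y`, if and only if `r₁₁² = 1`,
`r₂₂² = 1` and `r₁₂·r₂₁ = 1`. -/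
theorem statement16 (k : Type*) [Field k] [IsAlgClosed k] [CharZero k]
    (m n : ℕ) (hm : 0 < m) (hn : 0 < n)
    (ζm ζn : kˣ) (hζm : IsPrimitiveRoot ζm m) (hζn : IsPrimitiveRoot ζn n)
    (a b d : ℕ) (ha : a < m) (hb : b < Nat.gcd m n) (hd : d < n)
    (r11 r12 r21 r22 : kˣ)
    (h11 : r11 ^ m = ζm ^ a) (h11' : ζm ^ (2 * a) = 1)
    (h22 : r22 ^ n = ζn ^ d) (h22' : ζn ^ (2 * d) = 1)
    (h12n : r12 ^ n = 1) (h12m : r12 ^ m = (ζn ^ b)⁻¹)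
    (h21n : r21 ^ n = 1) (h21m : r21 ^ m = ζn ^ b)
    (R : ZMod m × ZMod n → ZMod m × ZMod n → kˣ)
    (hRdef : ∀ x y : ZMod m × ZMod n,
      R x y = r11 ^ (x.1.val * y.1.val) * r12 ^ (x.1.val * y.2.val) *
        r21 ^ (x.2.val * y.1.val) * r22 ^ (x.2.val * y.2.val))
    (hR : IsQuasiBicharacter (PhiABD m n ζm ζn a b d) R) :
    (∀ x y : ZMod m × ZMod n, R x y * R y x = 1) ↔
      (r11 ^ 2 = 1 ∧ r22 ^ 2 = 1 ∧ r12 * r21 = 1) := by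
  constructor
  · intro h
    have hr11 : r11 ^ 2 = 1 := by
      rcases eq_or_lt_of_le (show 1 ≤ m from hm) with hm1 | hm2
      · -- m = 1
        have hm1' : m = 1 := hm1.symm
        subst hm1'
        have : a = 0 := Nat.lt_one_iff.mp ha
        rw [this, pow_zero, pow_one] at h11
        rw [h11, one_pow]
      · have : Fact (1 < m) := ⟨hm2⟩
        have := h ((1 : ZMod m), (0 : ZMod n)) ((1 : ZMod m), (0 : ZMod n))
        rw [hRdef] at this
        simp [ZMod.val_one, ZMod.val_zero, ← sq] at this
        exact this
    have hr22 : r22 ^ 2 = 1 := by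
      rcases eq_or_lt_of_le (show 1 ≤ n from hn) with hn1 | hn2
      · have hn1' : n = 1 := hn1.symm
        subst hn1'
        have : d = 0 := Nat.lt_one_iff.mp hd
        rw [this, pow_zero, pow_one] at h22
        rw [h22, one_pow]
      · have : Fact (1 < n) := ⟨hn2⟩
        have := h ((0 : ZMod m), (1 : ZMod n)) ((0 : ZMod m), (1 : ZMod n))
        rw [hRdef] at this
        simp [ZMod.val_one, ZMod.val_zero, ← sq] at this
        exact this
    refine ⟨hr11, hr22, ?_⟩
    rcases eq_or_lt_of_le (show 1 ≤ m from hm) with hm1 | hm2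
    · have hm1' : m = 1 := hm1.symm
      subst hm1'
      have hb0 : b = 0 := Nat.lt_one_iff.mp (by simpa using hb)
      rw [hb0, pow_zero, inv_one, pow_one] at h12m
      rw [hb0, pow_zero, pow_one] at h21m
      rw [h12m, h21m, mul_one]
    rcases eq_or_lt_of_le (show 1 ≤ n from hn) with hn1 | hn2
    · have hn1' : n = 1 := hn1.symm
      subst hn1'
      rw [pow_one] at h12n h21n
      rw [h12n, h21n, mul_one]
    have : Fact (1 < m) := ⟨hm2⟩
    have : Fact (1 < n) := ⟨hn2⟩
    have := h ((1 : ZMod m), (0 : ZMod n)) ((0 : ZMod m), (1 : ZMod n))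
    rw [hRdef, hRdef] at this
    simpa [ZMod.val_one, ZMod.val_zero] using this
  · rintro ⟨h1, h2, h3⟩ x y
    rw [hRdef, hRdef]
    have e1 : r11 ^ (x.1.val * y.1.val) * r11 ^ (y.1.val * x.1.val) = 1 := by
      rw [mul_comm y.1.val, ← pow_add, ← two_mul, pow_mul, h1, one_pow]
    have e4 : r22 ^ (x.2.val * y.2.val) * r22 ^ (y.2.val * x.2.val) = 1 := by
      rw [mul_comm y.2.val, ← pow_add, ← two_mul, pow_mul, h2, one_pow]
    have e2 : r12 ^ (x.1.val * y.2.val) * r21 ^ (y.2.val * x.1.val) = 1 := by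
      rw [mul_comm y.2.val, ← mul_pow, h3, one_pow]
    have e3 : r21 ^ (x.2.val * y.1.val) * r12 ^ (y.1.val * x.2.val) = 1 := by
      rw [mul_comm y.1.val, mul_comm (r21 ^ _), ← mul_pow, h3, one_pow]
    calc r11 ^ (x.1.val * y.1.val) * r12 ^ (x.1.val * y.2.val) *
          r21 ^ (x.2.val * y.1.val) * r22 ^ (x.2.val * y.2.val) *
        (r11 ^ (y.1.val * x.1.val) * r12 ^ (y.1.val * x.2.val) *
          r21 ^ (y.2.val * x.1.val) * r22 ^ (y.2.val * x.2.val))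
        = (r11 ^ (x.1.val * y.1.val) * r11 ^ (y.1.val * x.1.val)) *
          ((r12 ^ (x.1.val * y.2.val) * r21 ^ (y.2.val * x.1.val)) *
          ((r21 ^ (x.2.val * y.1.val) * r12 ^ (y.1.val * x.2.val)) *
          (r22 ^ (x.2.val * y.2.val) * r22 ^ (y.2.val * x.2.val)))) := by
          simp only [mul_assoc, mul_left_comm, mul_comm]
      _ = 1 := by rw [e1, e2, e3, e4]; simp
end
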